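/- For every n ≥ 3 there exists an increasing 2-dimensional array g of size (n−1)(n−2) × (n−1)² containing no (n−1) × 2 subarray of type (1,2) and no n × 2 subarray of type (2,1). -/
import Mathlib


/-- `g` is of type (1,2) on `A × B`. -/
def Type12On {N M : ℕ} (g : Fin N × Fin M → ℝ)
    (A : Finset (Fin N)) (B : Finset (Fin M)) : Prop :=
  ∀ x₁ ∈ A, ∀ x₂ ∈ B, ∀ y₁ ∈ A, ∀ y₂ ∈ B,
    (g (x₁, x₂) < g (y₁, y₂) ↔ (x₁ < y₁ ∨ (x₁ = y₁ ∧ x₂ < y₂)))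

/-- `g` is of type (2,1) on `A × B`. -/
def Type21On {N M : ℕ} (g : Fin N × Fin M → ℝ)
    (A : Finset (Fin N)) (B : Finset (Fin M)) : Prop :=
  ∀ x₁ ∈ A, ∀ x₂ ∈ B, ∀ y₁ ∈ A, ∀ y₂ ∈ B,
    (g (x₁, x₂) < g (y₁, y₂) ↔ (x₂ < y₂ ∨ (x₂ = y₂ ∧ x₁ < y₁)))

namespace Stmt11Aux

/-- The encoding: rows are grouped into blocks of size `m`; the block index is the
most significant digit, then the column, then the row position within the block. -/
def enc (m a b : ℕ) : ℕ := (a / m) * (m ^ 2 * m) + b * m + a % m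

lemma small (m : ℕ) (hm : 0 < m) {b : ℕ} (hb : b < m ^ 2) (a : ℕ) :
    b * m + a % m < m ^ 2 * m := by
  have h1 : a % m < m := Nat.mod_lt a hm
  have h2 : (b + 1) * m ≤ m ^ 2 * m := Nat.mul_le_mul_right m hb
  have h3 : b * m + a % m < (b + 1) * m := by
    rw [Nat.add_mul, Nat.one_mul]; omega
  omega

/-- Rows in a strictly larger block always give strictly larger values. -/
lemma block_lt (m : ℕ) (hm : 0 < m) {a a' b b' : ℕ} (hb : b < m ^ 2)
    (h : a / m + 1 ≤ a' / m) : enc m a b < enc m a' b' := by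
  unfold enc
  have h1 : b * m + a % m < m ^ 2 * m := small m hm hb a
  calc (a / m) * (m ^ 2 * m) + b * m + a % m
      < (a / m) * (m ^ 2 * m) + m ^ 2 * m := by omega
    _ = (a / m + 1) * (m ^ 2 * m) := by ring
    _ ≤ (a' / m) * (m ^ 2 * m) := Nat.mul_le_mul_right _ h
    _ ≤ (a' / m) * (m ^ 2 * m) + b' * m + a' % m := by omega

/-- Within one block, the column strictly dominates. -/
lemma sameblock_lt (m : ℕ) (hm : 0 < m) {a a' b b' : ℕ}
    (hq : a / m = a' / m) (hb : b + 1 ≤ b') : enc m a' b < enc m a b' := by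
  unfold enc
  rw [hq]
  have h1 : a' % m < m := Nat.mod_lt a' hm
  have h2 : (b + 1) * m ≤ b' * m := Nat.mul_le_mul_right m hb
  have h3 : b * m + m ≤ b' * m := by rw [Nat.add_mul, Nat.one_mul] at h2; omega
  omega

lemma enc_mono (m : ℕ) (hm : 0 < m) {a a' b b' : ℕ} (ha : a ≤ a')
    (hb : b ≤ b') (hb' : b' < m ^ 2) : enc m a b ≤ enc m a' b' := by
  have hdiv : a / m ≤ a' / m := Nat.div_le_div_right ha
  rcases Nat.lt_or_ge (a / m) (a' / m) with hlt | hge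
  · exact (block_lt m hm (lt_of_le_of_lt hb hb') hlt).le
  · have hq : a / m = a' / m := le_antisymm hdiv hge
    have d1 := Nat.div_add_mod a m
    have d2 := Nat.div_add_mod a' m
    rw [hq] at d1
    have hmod : a % m ≤ a' % m := by
      generalize m * (a' / m) = t at d1 d2
      omega
    unfold enc
    rw [hq]
    have h2 : b * m ≤ b' * m := Nat.mul_le_mul_right m hb
    omega

lemma enc_inj (m : ℕ) (hm : 0 < m) {a a' b b' : ℕ} (hb : b < m ^ 2)
    (hb' : b' < m ^ 2) (h : enc m a b = enc m a' b') : a = a' ∧ b = b' := by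
  have hK : 0 < m ^ 2 * m := by positivity
  have hs : b * m + a % m < m ^ 2 * m := small m hm hb a
  have hs' : b' * m + a' % m < m ^ 2 * m := small m hm hb' a'
  -- extract block index
  have e1 : enc m a b = (b * m + a % m) + (a / m) * (m ^ 2 * m) := by
    unfold enc; ring
  have e2 : enc m a' b' = (b' * m + a' % m) + (a' / m) * (m ^ 2 * m) := by
    unfold enc; ring
  have q1 : enc m a b / (m ^ 2 * m) = a / m := by
    rw [e1, Nat.add_mul_div_right _ _ hK, Nat.div_eq_of_lt hs, Nat.zero_add]
  have q2 : enc m a' b' / (m ^ 2 * m) = a' / m := by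
    rw [e2, Nat.add_mul_div_right _ _ hK, Nat.div_eq_of_lt hs', Nat.zero_add]
  have hq : a / m = a' / m := by rw [← q1, ← q2, h]
  have hs2 : b * m + a % m = b' * m + a' % m := by
    have := h
    rw [e1, e2, hq] at this
    exact Nat.add_right_cancel this
  -- extract column
  have hr : a % m < m := Nat.mod_lt a hm
  have hr' : a' % m < m := Nat.mod_lt a' hm
  have c1 : (b * m + a % m) / m = b := by
    rw [Nat.add_comm, Nat.add_mul_div_right _ _ hm, Nat.div_eq_of_lt hr,
      Nat.zero_add]
  have c2 : (b' * m + a' % m) / m = b' := by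
    rw [Nat.add_comm, Nat.add_mul_div_right _ _ hm, Nat.div_eq_of_lt hr',
      Nat.zero_add]
  have hbb : b = b' := by rw [← c1, ← c2, hs2]
  have hmm : a % m = a' % m := by
    rw [hbb] at hs2
    omega
  refine ⟨?_, hbb⟩
  have d1 := Nat.div_add_mod a m
  have d2 := Nat.div_add_mod a' m
  rw [hq, hmm] at d1
  exact d1.symm.trans d2

end Stmt11Aux

open Stmt11Aux in
/-- For `n ≥ 3` there is an increasing array of size `(n-1)(n-2) × (n-1)²`
with no `(n-1) × 2` subarray of type (1,2) and no `n × 2` subarray of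
type (2,1). -/
theorem stmt_11 (n : ℕ) (hn : 3 ≤ n) :
    ∃ g : Fin ((n - 1) * (n - 2)) × Fin ((n - 1) ^ 2) → ℝ,
      Function.Injective g ∧
      (∀ x y : Fin ((n - 1) * (n - 2)) × Fin ((n - 1) ^ 2),
        x.1 ≤ y.1 → x.2 ≤ y.2 → g x ≤ g y) ∧
      (¬ ∃ (A : Finset (Fin ((n - 1) * (n - 2)))) (B : Finset (Fin ((n - 1) ^ 2))),
        A.card = n - 1 ∧ B.card = 2 ∧ Type12On g A B) ∧
      (¬ ∃ (A : Finset (Fin ((n - 1) * (n - 2)))) (B : Finset (Fin ((n - 1) ^ 2))),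
        A.card = n ∧ B.card = 2 ∧ Type21On g A B) := by
  have hm : 0 < n - 1 := by omega
  refine ⟨fun p => ((enc (n - 1) p.1.1 p.2.1 : ℕ) : ℝ), ?_, ?_, ?_, ?_⟩
  · -- injectivity
    intro x y hxy
    have h : enc (n - 1) x.1.1 x.2.1 = enc (n - 1) y.1.1 y.2.1 :=
      Nat.cast_injective hxy
    obtain ⟨ha, hb⟩ := enc_inj (n - 1) hm x.2.isLt y.2.isLt h
    exact Prod.ext (Fin.ext ha) (Fin.ext hb)
  · -- monotone
    intro x y h1 h2
    exact Nat.cast_le.mpr (enc_mono (n - 1) hm h1 h2 y.2.isLt)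
  · -- no (n-1) × 2 subarray of type (1,2)
    rintro ⟨A, B, hA, hB, hT⟩
    obtain ⟨c1, c2, hc, hBeq⟩ := Finset.card_eq_two.mp hB
    obtain ⟨b1, b2, hb12, hb1, hb2⟩ :
        ∃ b1 b2, b1 < b2 ∧ b1 ∈ B ∧ b2 ∈ B := by
      rcases lt_or_gt_of_ne hc with hlt | hlt
      · exact ⟨c1, c2, hlt, by simp [hBeq], by simp [hBeq]⟩
      · exact ⟨c2, c1, hlt, by simp [hBeq], by simp [hBeq]⟩
    -- pigeonhole: two rows of A lie in the same block of size n-1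
    have hmaps : ∀ a ∈ A, a.1 / (n - 1) ∈ Finset.range (n - 2) := by
      intro a _
      rw [Finset.mem_range]
      refine (Nat.div_lt_iff_lt_mul hm).mpr ?_
      exact lt_of_lt_of_eq a.isLt (Nat.mul_comm _ _)
    have hcard : (Finset.range (n - 2)).card < A.card := by
      rw [Finset.card_range, hA]; omega
    obtain ⟨x, hx, y, hy, hxy, hblock⟩ :=
      Finset.exists_ne_map_eq_of_card_lt_of_maps_to hcard hmaps
    obtain ⟨u, v, hu, hv, huv, hq⟩ :
        ∃ u v, u ∈ A ∧ v ∈ A ∧ u < v ∧ u.1 / (n - 1) = v.1 / (n - 1) := by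
      rcases hxy.lt_or_gt with h | h
      · exact ⟨x, y, hx, hy, h, hblock⟩
      · exact ⟨y, x, hy, hx, h, hblock.symm⟩
    have h1 : ((enc (n - 1) u.1 b2.1 : ℕ) : ℝ) < ((enc (n - 1) v.1 b1.1 : ℕ) : ℝ) :=
      (hT u hu b2 hb2 v hv b1 hb1).mpr (Or.inl huv)
    have h1' : enc (n - 1) u.1 b2.1 < enc (n - 1) v.1 b1.1 := Nat.cast_lt.mp h1
    have h2 : enc (n - 1) v.1 b1.1 < enc (n - 1) u.1 b2.1 :=
      sameblock_lt (n - 1) hm hq hb12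
    omega
  · -- no n × 2 subarray of type (2,1)
    rintro ⟨A, B, hA, hB, hT⟩
    obtain ⟨c1, c2, hc, hBeq⟩ := Finset.card_eq_two.mp hB
    obtain ⟨b1, b2, hb12, hb1, hb2⟩ :
        ∃ b1 b2, b1 < b2 ∧ b1 ∈ B ∧ b2 ∈ B := by
      rcases lt_or_gt_of_ne hc with hlt | hlt
      · exact ⟨c1, c2, hlt, by simp [hBeq], by simp [hBeq]⟩
      · exact ⟨c2, c1, hlt, by simp [hBeq], by simp [hBeq]⟩
    have hAne : A.Nonempty := Finset.card_pos.mp (by rw [hA]; omega)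
    set am := A.min' hAne with ham
    set aM := A.max' hAne with haM
    have hsub : A ⊆ Finset.Icc am aM := by
      intro a ha
      rw [Finset.mem_Icc]
      exact ⟨A.min'_le a ha, A.le_max' a ha⟩
    have hcard : n ≤ aM.1 + 1 - am.1 := by
      have := Finset.card_le_card hsub
      rwa [hA, Fin.card_Icc] at this
    have hgap : am.1 + (n - 1) ≤ aM.1 := by omega
    -- from Type21On: g(aM, b1) < g(am, b2)
    have h1 : ((enc (n - 1) aM.1 b1.1 : ℕ) : ℝ) < ((enc (n - 1) am.1 b2.1 : ℕ) : ℝ) :=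
      (hT aM (A.max'_mem hAne) b1 hb1 am (A.min'_mem hAne) b2 hb2).mpr
        (Or.inl hb12)
    have h1' : enc (n - 1) aM.1 b1.1 < enc (n - 1) am.1 b2.1 := Nat.cast_lt.mp h1
    -- but a row n-1 further down is in a strictly larger block
    have hdiv : am.1 / (n - 1) + 1 ≤ aM.1 / (n - 1) := by
      have h3 : (am.1 + (n - 1)) / (n - 1) ≤ aM.1 / (n - 1) :=
        Nat.div_le_div_right hgap
      rwa [Nat.add_div_right _ hm] at h3
    have h2 : enc (n - 1) am.1 b2.1 < enc (n - 1) aM.1 b1.1 :=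
      block_lt (n - 1) hm b2.isLt hdiv
    omega
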